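/- arXiv:2308.12926 — 2 statements merged into one kernel-verified Lean document; each statement's English description precedes it below -/
import Mathlib

section
/- Let T, R, c > 0 and let y:[0,T]→(0,∞) be differentiable with y(t) ≤ R for all t and |y'(t)| ≤ c·φ(y(t)) where φ(x)=x·max(−ln x,1). If y(0) = y₀ > 0, then for all t ∈ [0,T]: (y₀/(10(R+1)))^{exp(c t)} ≤ y(t) ≤ 10(R+1)·y₀^{exp(−c t)}. -/
open Set Real

lemma gronwall_aux (T c : ℝ) (hT : 0 ≤ T) (hc : 0 < c) (u u' : ℝ → ℝ)
    (hd : ∀ t ∈ Icc (0:ℝ) T, HasDerivAt u (u' t) t)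
    (hupos : ∀ t ∈ Icc (0:ℝ) T, 0 < u t)
    (hb : ∀ t ∈ Icc (0:ℝ) T, |u' t| ≤ c * u t) :
    ∀ t ∈ Icc (0:ℝ) T, u 0 * Real.exp (-(c*t)) ≤ u t ∧ u t ≤ u 0 * Real.exp (c*t) := by
  have h0 : (0:ℝ) ∈ Icc (0:ℝ) T := ⟨le_refl _, hT⟩
  have hcont : ContinuousOn u (Icc 0 T) := fun x hx =>
    (hd x hx).continuousAt.continuousWithinAt
  have upper : ∀ t ∈ Icc (0:ℝ) T, u t ≤ u 0 * Real.exp (c*t) := by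
    have key := norm_le_gronwallBound_of_norm_deriv_right_le (f := u) (f' := u')
      (δ := u 0) (K := c) (ε := 0) (a := 0) (b := T) hcont
      (fun x hx => (hd x (Ico_subset_Icc_self hx)).hasDerivWithinAt)
      (by simp [Real.norm_eq_abs, abs_of_pos (hupos 0 h0)])
      (fun x hx => by
        have := hb x (Ico_subset_Icc_self hx)
        simp [Real.norm_eq_abs, abs_of_pos (hupos x (Ico_subset_Icc_self hx))]
        linarith)
    intro t ht
    have := key t ht
    rw [sub_zero, gronwallBound_ε0, Real.norm_eq_abs,
      abs_of_pos (hupos t ht)] at this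
    exact this
  intro t ht
  refine ⟨?_, upper t ht⟩
  have hsub : ∀ s ∈ Icc (0:ℝ) t, t - s ∈ Icc (0:ℝ) T := by
    intro s hs
    constructor <;> [linarith [hs.2]; linarith [ht.2, hs.1]]
  have key := norm_le_gronwallBound_of_norm_deriv_right_le
    (f := fun s => u (t - s)) (f' := fun s => -(u' (t - s)))
    (δ := u t) (K := c) (ε := 0) (a := 0) (b := t)
    (fun x hx => ((hd (t - x) (hsub x hx)).continuousAt.comp
      (by fun_prop : Continuous fun s : ℝ => t - s).continuousAt).continuousWithinAt)
    (fun x hx => by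
      have h1 : HasDerivAt (fun s : ℝ => t - s) (-1) x := by
        simpa using (hasDerivAt_id x).const_sub t
      have := (hd (t - x) (hsub x (Ico_subset_Icc_self hx))).comp x h1
      simpa [mul_comm, Function.comp_def] using this.hasDerivWithinAt)
    (by simp [Real.norm_eq_abs, abs_of_pos (hupos t ht)])
    (fun x hx => by
      have hm := hsub x (Ico_subset_Icc_self hx)
      have := hb (t - x) hm
      simp [Real.norm_eq_abs, abs_of_pos (hupos (t - x) hm)]
      linarith)
  have := key t ⟨ht.1, le_refl _⟩
  rw [sub_zero, gronwallBound_ε0] at this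
  simp only [sub_self, Real.norm_eq_abs, abs_of_pos (hupos 0 h0)] at this
  have hepos := Real.exp_pos (c * t)
  have h2 : Real.exp (-(c*t)) * Real.exp (c*t) = 1 := by
    rw [← Real.exp_add]; simp
  have h3 := mul_le_mul_of_nonneg_right this (Real.exp_pos (-(c*t))).le
  calc u 0 * Real.exp (-(c*t)) ≤ u t * Real.exp (c*t) * Real.exp (-(c*t)) := h3
    _ = u t * (Real.exp (-(c*t)) * Real.exp (c*t)) := by ring
    _ = u t := by rw [h2, mul_one]

noncomputable def phi (x : ℝ) : ℝ := x * max (-Real.log x) 1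

theorem ode_log_gronwall (T R c : ℝ) (hT : 0 < T) (hR : 0 < R) (hc : 0 < c)
    (y y' : ℝ → ℝ)
    (hderiv : ∀ t ∈ Set.Icc (0:ℝ) T, HasDerivAt y (y' t) t)
    (hpos : ∀ t ∈ Set.Icc (0:ℝ) T, 0 < y t)
    (hbnd : ∀ t ∈ Set.Icc (0:ℝ) T, y t ≤ R)
    (hineq : ∀ t ∈ Set.Icc (0:ℝ) T, |y' t| ≤ c * phi (y t)) :
    ∀ t ∈ Set.Icc (0:ℝ) T,
      (y 0 / (10 * (R + 1))) ^ Real.exp (c * t) ≤ y t ∧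
      y t ≤ 10 * (R + 1) * (y 0) ^ Real.exp (-(c * t)) := by
  set M : ℝ := 10 * (R + 1) with hM
  have hMpos : (0:ℝ) < M := by nlinarith
  have hM1 : (1:ℝ) < M := by nlinarith
  have hMR : R < M := by nlinarith
  have hlogM0 : 0 ≤ Real.log M := Real.log_nonneg hM1.le
  have hlogMR : 1 ≤ Real.log M - Real.log R := by
    rw [← Real.log_div (ne_of_gt hMpos) (ne_of_gt hR)]
    have h10 : (10:ℝ) ≤ M / R := by
      rw [le_div_iff₀ hR]; nlinarith
    have he : Real.exp 1 ≤ 10 := by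
      have := Real.exp_one_lt_d9; linarith
    calc (1:ℝ) = Real.log (Real.exp 1) := (Real.log_exp 1).symm
      _ ≤ Real.log (M / R) := Real.log_le_log (Real.exp_pos 1) (he.trans h10)
  set u : ℝ → ℝ := fun t => Real.log M - Real.log (y t) with hu
  set u' : ℝ → ℝ := fun t => -(y' t / y t) with hu'
  have hd : ∀ t ∈ Icc (0:ℝ) T, HasDerivAt u (u' t) t := by
    intro t ht
    exact ((hderiv t ht).log (ne_of_gt (hpos t ht))).const_sub _
  have hupos : ∀ t ∈ Icc (0:ℝ) T, 0 < u t := by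
    intro t ht
    exact sub_pos.2 (Real.log_lt_log (hpos t ht) (lt_of_le_of_lt (hbnd t ht) hMR))
  have hmax : ∀ t ∈ Icc (0:ℝ) T, max (-Real.log (y t)) 1 ≤ u t := by
    intro t ht
    have hyR : Real.log (y t) ≤ Real.log R := Real.log_le_log (hpos t ht) (hbnd t ht)
    apply max_le
    · simp only [hu]; linarith
    · simp only [hu]; linarith
  have hb : ∀ t ∈ Icc (0:ℝ) T, |u' t| ≤ c * u t := by
    intro t ht
    have hyt := hpos t ht
    have h1 : |u' t| = |y' t| / y t := by
      simp only [hu', abs_neg, abs_div, abs_of_pos hyt]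
    rw [h1, div_le_iff₀ hyt]
    have h2 := hineq t ht
    unfold phi at h2
    have h3 := hmax t ht
    nlinarith [mul_le_mul_of_nonneg_left h3 (mul_pos hc hyt).le]
  have G := gronwall_aux T c hT.le hc u u' hd hupos hb
  intro t ht
  obtain ⟨Glo, Gup⟩ := G t ht
  have hy0 : 0 < y 0 := hpos 0 ⟨le_refl _, hT.le⟩
  have hyt := hpos t ht
  have hu0 : u 0 = Real.log M - Real.log (y 0) := rfl
  have hut : u t = Real.log M - Real.log (y t) := rfl
  rw [hut, hu0] at Glo Gup
  constructor
  · have hb0 : 0 < y 0 / M := div_pos hy0 hMpos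
    rw [Real.rpow_def_of_pos hb0, Real.log_div (ne_of_gt hy0) (ne_of_gt hMpos)]
    calc Real.exp ((Real.log (y 0) - Real.log M) * Real.exp (c * t))
        ≤ Real.exp (Real.log (y t)) := by
          apply Real.exp_le_exp.2
          nlinarith
      _ = y t := Real.exp_log hyt
  · rw [Real.rpow_def_of_pos hy0]
    have hnn : 0 ≤ Real.exp (-(c*t)) * Real.log M :=
      mul_nonneg (Real.exp_pos _).le hlogM0
    calc y t = Real.exp (Real.log (y t)) := (Real.exp_log hyt).symm
      _ ≤ Real.exp (Real.log M + Real.log (y 0) * Real.exp (-(c*t))) := by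
          apply Real.exp_le_exp.2
          nlinarith
      _ = M * Real.exp (Real.log (y 0) * Real.exp (-(c * t))) := by
          rw [Real.exp_add, Real.exp_log hMpos]
end

section
/- If f:S¹→ℂ is continuous and e^f belongs to Ḣ^{1/2}(S¹), then f belongs to Ḣ^{1/2}(S¹). -/
open MeasureTheory Real

/-- Finiteness of the homogeneous `H^{1/2}(S¹)` seminorm, via the double-integral formula. -/
def memHhalf (g : ℝ → ℂ) : Prop :=
  (∫⁻ α in Set.Ioc (0:ℝ) (2 * Real.pi), ∫⁻ β in Set.Ioc (0:ℝ) (2 * Real.pi),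
      ENNReal.ofReal (‖g α - g β‖^2 / (Real.sin ((α - β) / 2))^2)) < ⊤

private lemma exp_lower {z : ℂ} (hz : ‖z‖ ≤ 1/2) :
    ‖z‖ / 2 ≤ ‖Complex.exp z - 1‖ := by
  have h1 := Complex.norm_exp_sub_one_sub_id_le (hz.trans (by norm_num))
  have h2 : ‖z‖ ≤ ‖Complex.exp z - 1‖
      + ‖Complex.exp z - 1 - z‖ := by
    have h3 := norm_add_le (Complex.exp z - 1) (-(Complex.exp z - 1 - z))
    rw [show Complex.exp z - 1 + -(Complex.exp z - 1 - z) = z by ring,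
      norm_neg] at h3
    exact h3
  have h4 := norm_nonneg z
  nlinarith [h1, h2, h4, hz]

theorem log_of_hhalf (f : ℝ → ℂ) (hf : Continuous f)
    (hper : Function.Periodic f (2 * Real.pi))
    (hexp : memHhalf (fun x => Complex.exp (f x))) :
    memHhalf f := by
  have hπ : (0:ℝ) < Real.pi := Real.pi_pos
  have h2π : (0:ℝ) < 2 * Real.pi := by linarith
  -- reduction modulo 2π
  have hred : ∀ x : ℝ, ∃ n : ℤ, 0 ≤ x - n*(2*Real.pi) ∧ x - n*(2*Real.pi) < 2*Real.pi := by
    intro x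
    refine ⟨⌊x/(2*Real.pi)⌋, ?_, ?_⟩
    · have h1 : (⌊x/(2*Real.pi)⌋ : ℝ) * (2*Real.pi) ≤ x := by
        rw [← le_div_iff₀ h2π]; exact Int.floor_le _
      linarith
    · have h1 : x < ((⌊x/(2*Real.pi)⌋ : ℝ) + 1) * (2*Real.pi) := by
        rw [← div_lt_iff₀ h2π]; exact Int.lt_floor_add_one _
      linarith
  -- bound M
  obtain ⟨x₀, _, hx₀⟩ := (isCompact_Icc (a := (0:ℝ)) (b := 2*Real.pi)).exists_isMaxOn
    ⟨0, by constructor <;> linarith⟩ (continuous_norm.comp hf).continuousOn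
  set M := ‖f x₀‖ with hMdef
  have hM0 : 0 ≤ M := norm_nonneg _
  have hMb : ∀ x, ‖f x‖ ≤ M := by
    intro x
    obtain ⟨n, hn0, hn2⟩ := hred x
    have he : f (x - n*(2*Real.pi)) = f x := hper.sub_int_mul_eq n
    rw [← he]; exact hx₀ ⟨hn0, hn2.le⟩
  -- uniform continuity
  have hUC := (isCompact_Icc (a := -Real.pi) (b := 3*Real.pi)).uniformContinuousOn_of_continuous
    hf.continuousOn
  rw [Metric.uniformContinuousOn_iff] at hUC
  obtain ⟨δ₀, hδ₀, hδ₀f⟩ := hUC (1/2) (by norm_num)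
  set δ := min (δ₀/2) Real.pi with hδdef
  have hδpos : 0 < δ := lt_min (by linarith) hπ
  have hδπ : δ ≤ Real.pi := min_le_right _ _
  have hδf : ∀ x y : ℝ, |x - y| ≤ δ → ‖f x - f y‖ ≤ 1/2 := by
    intro x y hxy
    obtain ⟨n, hn0, hn2⟩ := hred x
    have hx' : f (x - n*(2*Real.pi)) = f x := hper.sub_int_mul_eq n
    have hy' : f (y - n*(2*Real.pi)) = f y := hper.sub_int_mul_eq n
    set x' := x - n*(2*Real.pi) with hx'def
    set y' := y - n*(2*Real.pi) with hy'def
    have hd : x' - y' = x - y := by rw [hx'def, hy'def]; ring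
    have habs : |x' - y'| ≤ δ := by rw [hd]; exact hxy
    obtain ⟨hab1, hab2⟩ := abs_le.mp habs
    have hxmem : x' ∈ Set.Icc (-Real.pi) (3*Real.pi) := ⟨by linarith, by linarith⟩
    have hymem : y' ∈ Set.Icc (-Real.pi) (3*Real.pi) := ⟨by linarith, by linarith⟩
    have hlt := hδ₀f x' hxmem y' hymem
      (by rw [Real.dist_eq]; calc |x' - y'| ≤ δ := habs
            _ ≤ δ₀/2 := min_le_left _ _
            _ < δ₀ := by linarith)
    rw [Complex.dist_eq] at hlt
    rw [← hx', ← hy']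
    exact hlt.le
  -- near-case comparison
  have hnear : ∀ x y : ℝ, ‖f x - f y‖ ≤ 1/2 →
      ‖f x - f y‖
        ≤ 2 * Real.exp M * ‖Complex.exp (f x) - Complex.exp (f y)‖ := by
    intro x y hz
    have key : Complex.exp (f x) - Complex.exp (f y)
        = Complex.exp (f y) * (Complex.exp (f x - f y) - 1) := by
      rw [mul_sub, mul_one, ← Complex.exp_add]; ring_nf
    have h1 : Real.exp (-M) ≤ ‖Complex.exp (f y)‖ := by
      rw [Complex.norm_exp]
      apply Real.exp_le_exp.mpr
      have hre := (abs_le.mp ((Complex.abs_re_le_norm (f y)).trans (hMb y))).1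
      linarith
    have h2 := exp_lower hz
    have h3 : Real.exp (-M) * (‖f x - f y‖ / 2)
        ≤ ‖Complex.exp (f y)‖ * ‖Complex.exp (f x - f y) - 1‖ :=
      mul_le_mul h1 h2 (by positivity) (norm_nonneg _)
    have h4 := mul_le_mul_of_nonneg_left h3 (by positivity : (0:ℝ) ≤ 2*Real.exp M)
    have hinv : Real.exp M * Real.exp (-M) = 1 := by rw [← Real.exp_add]; simp
    have h5 : 2*Real.exp M*(Real.exp (-M)*(‖f x - f y‖/2))
        = ‖f x - f y‖ := by
      linear_combination (‖f x - f y‖) * hinv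
    rw [key, norm_mul]
    rw [h5] at h4
    exact h4
  -- dichotomy
  have hdich : ∀ x y : ℝ, (∃ n : ℤ, |x - y - n*(2*Real.pi)| ≤ δ) ∨
      Real.sin (δ/2) ^ 2 ≤ Real.sin ((x-y)/2) ^ 2 := by
    intro x y
    set d := x - y with hddef
    set n := round (d/(2*Real.pi)) with hndef
    have h1 : |d/(2*Real.pi) - n| ≤ 1/2 := abs_sub_round _
    have h2 : |d - n*(2*Real.pi)| ≤ Real.pi := by
      have he : d - n*(2*Real.pi) = (d/(2*Real.pi) - n)*(2*Real.pi) := by field_simp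
      rw [he, abs_mul, abs_of_pos h2π]
      nlinarith [h1]
    by_cases hc : |d - n*(2*Real.pi)| ≤ δ
    · exact Or.inl ⟨n, hc⟩
    · right
      push_neg at hc
      set d' := d - n*(2*Real.pi) with hd'def
      have hsin : Real.sin (d/2) ^ 2 = Real.sin (d'/2) ^ 2 := by
        have he : d/2 = d'/2 + n * Real.pi := by rw [hd'def]; ring
        rw [he, Real.sin_add_int_mul_pi, mul_pow]
        have hpow : ((-1:ℝ)^n)^2 = 1 := by
          rw [← zpow_natCast ((-1:ℝ)^n) 2, ← zpow_mul, mul_comm, zpow_mul]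
          norm_num
        rw [hpow, one_mul]
      have habs2 : Real.sin (d'/2) ^ 2 = Real.sin (|d'|/2) ^ 2 := by
        rcases abs_cases d' with ⟨h, _⟩ | ⟨h, _⟩
        · rw [h]
        · rw [h, show -d'/2 = -(d'/2) by ring, Real.sin_neg]; ring
      rw [hsin, habs2]
      have h3 : δ/2 ≤ |d'|/2 := by linarith [hc.le]
      have h4 : |d'|/2 ≤ Real.pi/2 := by linarith
      have h5 : Real.sin (δ/2) ≤ Real.sin (|d'|/2) :=
        Real.sin_le_sin_of_le_of_le_pi_div_two (by linarith) h4 h3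
      have h6 : 0 ≤ Real.sin (δ/2) :=
        Real.sin_nonneg_of_nonneg_of_le_pi (by linarith) (by linarith)
      exact pow_le_pow_left₀ h6 h5 2
  -- constants
  have hs0 : 0 < Real.sin (δ/2) :=
    Real.sin_pos_of_pos_of_lt_pi (by linarith) (by linarith)
  set C₁ := (2*Real.exp M)^2 with hC₁def
  set C₂ := (2*M)^2 / (Real.sin (δ/2))^2 with hC₂def
  have hC₁0 : 0 ≤ C₁ := by positivity
  -- pointwise bound
  have hpt : ∀ x y : ℝ,
      ENNReal.ofReal ((‖f x - f y‖)^2 / (Real.sin ((x-y)/2))^2)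
        ≤ ENNReal.ofReal C₁ *
            ENNReal.ofReal ((‖Complex.exp (f x) - Complex.exp (f y)‖)^2
              / (Real.sin ((x-y)/2))^2)
          + ENNReal.ofReal C₂ := by
    intro x y
    rcases hdich x y with ⟨n, hn⟩ | hfar
    · -- near case
      have hfy : f (y + n*(2*Real.pi)) = f y := by
        have := hper.sub_int_mul_eq (x := y + n*(2*Real.pi)) n
        rw [show y + n*(2*Real.pi) - n*(2*Real.pi) = y by ring] at this
        exact this.symm
      have hz : ‖f x - f y‖ ≤ 1/2 := by
        have h := hδf x (y + n*(2*Real.pi))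
          (by rw [show x - (y + n*(2*Real.pi)) = x - y - n*(2*Real.pi) by ring]; exact hn)
        rwa [hfy] at h
      have h1 := hnear x y hz
      have hA : (‖f x - f y‖)^2
          ≤ C₁ * (‖Complex.exp (f x) - Complex.exp (f y)‖)^2 := by
        have h2 := pow_le_pow_left₀ (norm_nonneg _) h1 2
        rw [mul_pow] at h2
        exact h2
      have hdiv : (‖f x - f y‖)^2 / (Real.sin ((x-y)/2))^2
          ≤ C₁ * ((‖Complex.exp (f x) - Complex.exp (f y)‖)^2
              / (Real.sin ((x-y)/2))^2) := by
        rcases eq_or_lt_of_le (sq_nonneg (Real.sin ((x-y)/2))) with h | h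
        · rw [← h]; simp
        · rw [mul_div_assoc']
          exact (div_le_div_iff_of_pos_right h).mpr hA
      refine le_add_right ?_
      calc ENNReal.ofReal ((‖f x - f y‖)^2 / (Real.sin ((x-y)/2))^2)
          ≤ ENNReal.ofReal (C₁ * ((‖Complex.exp (f x) - Complex.exp (f y)‖)^2
              / (Real.sin ((x-y)/2))^2)) := ENNReal.ofReal_le_ofReal hdiv
        _ = _ := ENNReal.ofReal_mul hC₁0
    · -- far case
      have hnum : (‖f x - f y‖)^2 ≤ (2*M)^2 := by
        have h1 : ‖f x - f y‖ ≤ 2*M := by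
          have h2 := norm_add_le (f x) (-(f y))
          simp only [norm_neg, ← sub_eq_add_neg] at h2
          have := hMb x; have := hMb y
          linarith
        exact pow_le_pow_left₀ (norm_nonneg _) h1 2
      have hAle : (‖f x - f y‖)^2 / (Real.sin ((x-y)/2))^2 ≤ C₂ :=
        div_le_div₀ (by positivity) hnum (by positivity) hfar
      exact le_trans (ENNReal.ofReal_le_ofReal hAle) le_add_self
  -- integration
  set S := Set.Ioc (0:ℝ) (2*Real.pi) with hSdef
  set B := fun (α β : ℝ) =>
    ENNReal.ofReal ((‖Complex.exp (f α) - Complex.exp (f β)‖)^2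
      / (Real.sin ((α-β)/2))^2) with hBdef
  have hμS : volume S < ⊤ := by
    rw [hSdef, Real.volume_Ioc]; exact ENNReal.ofReal_lt_top
  have step1 : (∫⁻ α in S, ∫⁻ β in S,
      ENNReal.ofReal ((‖f α - f β‖)^2 / (Real.sin ((α-β)/2))^2))
      ≤ ∫⁻ α in S, ∫⁻ β in S, (ENNReal.ofReal C₁ * B α β + ENNReal.ofReal C₂) :=
    lintegral_mono fun α => lintegral_mono fun β => hpt α β
  have inner_eq : ∀ α, (∫⁻ β in S, (ENNReal.ofReal C₁ * B α β + ENNReal.ofReal C₂))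
      = ENNReal.ofReal C₁ * (∫⁻ β in S, B α β) + ENNReal.ofReal C₂ * volume S := by
    intro α
    rw [lintegral_add_right _ measurable_const,
      lintegral_const_mul' _ _ ENNReal.ofReal_ne_top, lintegral_const,
      Measure.restrict_apply_univ]
  have step2 : (∫⁻ α in S, ∫⁻ β in S, (ENNReal.ofReal C₁ * B α β + ENNReal.ofReal C₂))
      = ENNReal.ofReal C₁ * (∫⁻ α in S, ∫⁻ β in S, B α β)
        + (ENNReal.ofReal C₂ * volume S) * volume S := by
    simp_rw [inner_eq]
    rw [lintegral_add_right _ measurable_const,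
      lintegral_const_mul' _ _ ENNReal.ofReal_ne_top, lintegral_const,
      Measure.restrict_apply_univ]
  have hBfin : (∫⁻ α in S, ∫⁻ β in S, B α β) < ⊤ := hexp
  have hfin : ENNReal.ofReal C₁ * (∫⁻ α in S, ∫⁻ β in S, B α β)
      + (ENNReal.ofReal C₂ * volume S) * volume S < ⊤ := by
    apply ENNReal.add_lt_top.mpr
    constructor
    · exact ENNReal.mul_lt_top ENNReal.ofReal_lt_top hBfin
    · exact ENNReal.mul_lt_top
        (ENNReal.mul_lt_top ENNReal.ofReal_lt_top hμS) hμS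
  calc (∫⁻ α in S, ∫⁻ β in S,
      ENNReal.ofReal ((‖f α - f β‖)^2 / (Real.sin ((α-β)/2))^2))
      ≤ _ := step1
    _ = _ := step2
    _ < ⊤ := hfin
end
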